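/- arXiv:1808.00602 — 6 statements merged into one kernel-verified Lean document; each statement's English description precedes it below -/
import Mathlib

section
/- For partitions μ ⊆ λ with μ ≠ λ and integers f, g, if T = T_{λ/μ}(f,g) is the threshold number, then W(λ/μ) ≥ g - T, where W(λ/μ) = max_i(λ_i - μ_i) is the width. -/
/-- A partition: a weakly decreasing sequence of naturals, eventually zero
(finite support). `parts i` is the (i+1)-st part (0-indexed). -/
structure NatPartition where
  parts : ℕ →₀ ℕ
  antitone : ∀ ⦃i j : ℕ⦄, i ≤ j → parts j ≤ parts i

namespace NatPartition

/-- The weight `|λ|` of a partition: the sum of its parts. -/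
def weight (l : NatPartition) : ℕ := l.parts.sum fun _ n => n

/-- The (i+1)-st part of the conjugate partition: the number of indices `j`
with `parts j ≥ i + 1`. -/
def conj (l : NatPartition) (i : ℕ) : ℕ :=
  (l.parts.support.filter fun j => i + 1 ≤ l.parts j).card

end NatPartition

open NatPartition

/-- The (i+1)-st part of `ν''(λ,μ,n)`, namely `min (λ_i, max (μ_i, μ_i + n))`. -/
def nuppParts (lam mu : NatPartition) (n : ℤ) (i : ℕ) : ℕ :=
  min (lam.parts i) ((max ((mu.parts i : ℤ)) ((mu.parts i : ℤ) + n)).toNat)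

/-- The weight `|ν''(λ,μ,n)|`. -/
def nuppWeight (lam mu : NatPartition) (n : ℤ) : ℕ :=
  ∑ i ∈ lam.parts.support, nuppParts lam mu n i

/-- The (i+1)-st part of the conjugate of `ν'(λ,μ,n)`, namely
`max (μ̃_i, min (λ̃_i, λ̃_i - n))`. -/
def nupConj (lam mu : NatPartition) (n : ℤ) (i : ℕ) : ℕ :=
  (max ((mu.conj i : ℤ)) (min ((lam.conj i : ℤ)) ((lam.conj i : ℤ) - n))).toNat

/-- The (i+1)-st part of `ν'(λ,μ,n)`, obtained by conjugating back. -/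
def nupParts (lam mu : NatPartition) (n : ℤ) (i : ℕ) : ℕ :=
  ((Finset.range (lam.parts 0)).filter fun t => i + 1 ≤ nupConj lam mu n t).card

/-- The weight `|ν'(λ,μ,n)|` (computed as the sum of the parts of its conjugate). -/
def nupWeight (lam mu : NatPartition) (n : ℤ) : ℕ :=
  ∑ i ∈ Finset.range (lam.parts 0), nupConj lam mu n i

/-- The width `W(λ/μ) = max_i (λ_i - μ_i)`. -/
def skewWidth (lam mu : NatPartition) : ℕ :=
  lam.parts.support.sup fun i => lam.parts i - mu.parts i

/-- The height `H(λ/μ) = max_i (λ̃_i - μ̃_i)`. -/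
def skewHeight (lam mu : NatPartition) : ℕ :=
  (Finset.range (lam.parts 0)).sup fun i => lam.conj i - mu.conj i

/-- Containment `ν'(λ,μ,a) ⊆ ν''(λ,μ,b)` (partwise inequality). -/
def nupSubNupp (lam mu : NatPartition) (a b : ℤ) : Prop :=
  ∀ i, nupParts lam mu a i ≤ nuppParts lam mu b i

/-- The set of which the threshold number `T_{λ/μ}(f,g)` is the greatest element. -/
def threshSet (lam mu : NatPartition) (f g : ℤ) : Set ℤ :=
  {t : ℤ | nupSubNupp lam mu (f - t) (g - t)}

lemma conj_ge_iff (lam : NatPartition) (i t : ℕ) :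
    i + 1 ≤ lam.conj t ↔ t + 1 ≤ lam.parts i := by
  constructor
  · intro h
    by_contra hc
    push_neg at hc
    have hss : (lam.parts.support.filter fun j => t + 1 ≤ lam.parts j) ⊆ Finset.range i := by
      intro j hj
      simp only [Finset.mem_filter] at hj
      rw [Finset.mem_range]
      by_contra hji
      push_neg at hji
      have := lam.antitone hji
      omega
    have := Finset.card_le_card hss
    simp only [NatPartition.conj] at h
    rw [Finset.card_range] at this
    omega
  · intro h
    have hss : Finset.range (i + 1) ⊆
        lam.parts.support.filter fun j => t + 1 ≤ lam.parts j := by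
      intro j hj
      rw [Finset.mem_range] at hj
      have := lam.antitone (show j ≤ i by omega)
      simp only [Finset.mem_filter, Finsupp.mem_support_iff]
      omega
    have := Finset.card_le_card hss
    rw [Finset.card_range] at this
    exact this

lemma conj_mono (lam mu : NatPartition) (hsub : ∀ i, mu.parts i ≤ lam.parts i) (i : ℕ) :
    mu.conj i ≤ lam.conj i := by
  apply Finset.card_le_card
  intro j hj
  simp only [Finset.mem_filter, Finsupp.mem_support_iff] at *
  have := hsub j
  omega

lemma nupConj_le (lam mu : NatPartition) (hsub : ∀ i, mu.parts i ≤ lam.parts i)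
    (a : ℤ) (i : ℕ) : nupConj lam mu a i ≤ lam.conj i := by
  rw [nupConj, Int.toNat_le]
  exact max_le (by exact_mod_cast conj_mono lam mu hsub i) (min_le_left _ _)

lemma filter_conj (lam : NatPartition) (i : ℕ) :
    ((Finset.range (lam.parts 0)).filter fun t => i + 1 ≤ lam.conj t)
      = Finset.range (lam.parts i) := by
  ext t
  simp only [Finset.mem_filter, Finset.mem_range, conj_ge_iff]
  have := lam.antitone (Nat.zero_le i)
  omega

lemma nupParts_le (lam mu : NatPartition) (hsub : ∀ i, mu.parts i ≤ lam.parts i)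
    (a : ℤ) (i : ℕ) : nupParts lam mu a i ≤ lam.parts i := by
  have hss : ((Finset.range (lam.parts 0)).filter fun t => i + 1 ≤ nupConj lam mu a t)
      ⊆ (Finset.range (lam.parts 0)).filter fun t => i + 1 ≤ lam.conj t := by
    intro t ht
    simp only [Finset.mem_filter] at ht ⊢
    have := nupConj_le lam mu hsub a t
    exact ⟨ht.1, by omega⟩
  have := Finset.card_le_card hss
  rw [filter_conj, Finset.card_range] at this
  exact this

/-- For `μ ⊊ λ`, the threshold number `T = T_{λ/μ}(f,g)` satisfies `W(λ/μ) ≥ g - T`. -/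
theorem stmt9 (lam mu : NatPartition) (hsub : ∀ i, mu.parts i ≤ lam.parts i)
    (hne : mu.parts ≠ lam.parts)
    (f g T : ℤ) (hT : IsGreatest (threshSet lam mu f g) T) :
    g - T ≤ (skewWidth lam mu : ℤ) := by
  have hmem : (g - (skewWidth lam mu : ℤ)) ∈ threshSet lam mu f g := by
    intro i
    have h1 := nupParts_le lam mu hsub (f - (g - (skewWidth lam mu : ℤ))) i
    have h2 : lam.parts i ≤ nuppParts lam mu (g - (g - (skewWidth lam mu : ℤ))) i := by
      have hw : (lam.parts i : ℤ) - (mu.parts i : ℤ) ≤ (skewWidth lam mu : ℤ) := by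
        by_cases hi : i ∈ lam.parts.support
        · have h3 := Finset.le_sup (f := fun j => lam.parts j - mu.parts j) hi
          have := hsub i
          unfold skewWidth
          omega
        · rw [Finsupp.notMem_support_iff] at hi
          have := hsub i
          omega
      unfold nuppParts
      refine le_min le_rfl ?_
      have hmax : (lam.parts i : ℤ) ≤
          max ((mu.parts i : ℤ)) ((mu.parts i : ℤ) + (g - (g - (skewWidth lam mu : ℤ)))) := by
        refine le_trans ?_ (le_max_right _ _)
        omega
      omega
    exact le_trans h1 h2
  linarith [hT.2 hmem]
end

section
/- Let R be a commutative ring, let φ : F → G be an R-linear map of finite free modules with rank F = f < rank G, and let ε : ∧^{f+1}G* ⊗ ∧^f F → G* be the map defined by ε(e*_I ⊗ b) = Σ_{J ⊂ I, |J| = f} sgn(J ⊂ I) det(φ_J) e*_{I∖J}, where φ_J denotes the submatrix of φ with columns indexed by J. Then the composition φ* ∘ ε = 0, i.e., for every x ∈ ∧^{f+1}G* ⊗ ∧^f F, the functional ε(x) vanishes on the image of φ. -/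
open Matrix

/-- The coefficient of `e*_{I∖J}` (for `J = I.erase i`) in the Buchsbaum–Rim map
`ε(e*_I ⊗ b) = Σ_{J ⊂ I, |J| = f} sgn(J ⊂ I) det(φ_J) e*_{I∖J}`:
the sign `sgn(J ⊂ I) = (-1)^(f + 1 - k)` (where `i` is the `k`-th smallest element
of `I`) times the `f × f` minor of `M` on the rows indexed by `J = I ∖ {i}`. -/
noncomputable def epsCoeff {R : Type*} [CommRing R] {f g : ℕ}
    (M : Matrix (Fin g) (Fin f) R) (I : Finset (Fin g)) (hI : I.card = f + 1)
    (i : Fin g) (hi : i ∈ I) : R :=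
  (-1 : R) ^ (f - (I.filter fun j => j < i).card) *
    (M.submatrix
      (fun r : Fin f =>
        ((I.erase i).orderIsoOfFin
          (by rw [Finset.card_erase_of_mem hi, hI]; rfl) r : Fin g))
      id).det

/-- The composition `φ* ∘ ε = 0`: for every basis element `e*_I ⊗ b` of
`∧^{f+1}G* ⊗ ∧^f F`, the functional `ε(e*_I ⊗ b)` vanishes on the image of `φ`,
where `φ` is given by the matrix `M`. -/
theorem stmt13 (R : Type*) [CommRing R] (f g : ℕ) (hfg : f < g)
    (M : Matrix (Fin g) (Fin f) R)
    (I : Finset (Fin g)) (hI : I.card = f + 1) (v : Fin f → R) :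
    ∑ i ∈ I.attach, epsCoeff M I hI i.1 i.2 * M.mulVec v i.1 = 0 := by
  set σ := I.orderEmbOfFin hI with hσ
  -- the (f+1)×(f+1) matrix: first f columns from M (rows indexed by I), last column M.mulVec v
  set N : Matrix (Fin (f + 1)) (Fin (f + 1)) R :=
    Matrix.of fun r => Fin.snoc (fun c => M (σ r) c) (M.mulVec v (σ r)) with hN
  -- det N = 0 since last column is a combination of the others
  have hdet : N.det = 0 := by
    have key : N = N.updateCol (Fin.last f)
        (fun k => ∑ i, (Fin.snoc v 0 : Fin (f + 1) → R) i • N k i) := by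
      ext r c
      induction c using Fin.lastCases with
      | last =>
        simp only [Matrix.updateCol_apply, if_pos rfl]
        rw [Fin.sum_univ_castSucc]
        simp [hN, Matrix.mulVec, dotProduct, mul_comm]
      | cast c =>
        simp [Matrix.updateCol_apply, Fin.ext_iff, (Fin.castSucc_lt_last c).ne]
    calc N.det = (N.updateCol (Fin.last f)
        (fun k => ∑ i, (Fin.snoc v 0 : Fin (f + 1) → R) i • N k i)).det := by rw [← key]
      _ = (Fin.snoc v 0 : Fin (f + 1) → R) (Fin.last f) • N.det :=
        Matrix.det_updateCol_sum N (Fin.last f) _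
      _ = 0 := by simp
  -- Laplace expansion along the last column
  rw [Matrix.det_succ_column N (Fin.last f)] at hdet
  rw [← hdet]
  -- reindex the sum via the order isomorphism Fin (f+1) ≃o I
  rw [show I.attach = Finset.univ from rfl]
  refine (Fintype.sum_equiv ((I.orderIsoOfFin hI).toEquiv) _ _ fun r => ?_).symm
  -- identify terms
  have hmem : ∀ r : Fin (f + 1), ((I.orderIsoOfFin hI) r : Fin g) = σ r := fun r =>
    Finset.coe_orderIsoOfFin_apply I hI r
  have hσr : σ r ∈ I := I.orderEmbOfFin_mem hI r
  -- the submatrix identification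
  have hsub : ∀ a : Fin f, σ (r.succAbove a) =
      ((I.erase (σ r)).orderIsoOfFin
        (by rw [Finset.card_erase_of_mem hσr, hI]; rfl) a : Fin g) := by
    have h' : (I.erase (σ r)).card = f := by
      rw [Finset.card_erase_of_mem hσr, hI]; rfl
    have := Finset.orderEmbOfFin_unique h'
      (f := fun a : Fin f => σ (r.succAbove a))
      (fun a => Finset.mem_erase.2 ⟨fun h => (Fin.succAbove_ne r a) (σ.injective h),
        I.orderEmbOfFin_mem hI _⟩)
      (σ.strictMono.comp (Fin.strictMono_succAbove r))
    intro a
    rw [Finset.coe_orderIsoOfFin_apply, ← congrFun this a]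
  -- the sign identification
  have hcard : (I.filter fun j => j < σ r).card = (r : ℕ) := by
    have himg : (I.filter fun j => j < σ r) = (Finset.Iio r).image fun m => σ m := by
      ext j
      simp only [Finset.mem_filter, Finset.mem_image, Finset.mem_Iio]
      constructor
      · rintro ⟨hjI, hjlt⟩
        obtain ⟨m, hm⟩ := (Set.ext_iff.1 (I.range_orderEmbOfFin hI) j).2 hjI
        exact ⟨m, σ.strictMono.lt_iff_lt.1 (hm ▸ hjlt), hm⟩
      · rintro ⟨m, hmlt, rfl⟩
        exact ⟨I.orderEmbOfFin_mem hI m, σ.strictMono hmlt⟩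
    rw [himg, Finset.card_image_of_injective _ σ.injective, Fin.card_Iio]
  have hrle : (r : ℕ) ≤ f := Nat.lt_succ_iff.1 r.isLt
  have hsign : ((-1 : R) ^ (f - (r : ℕ))) = (-1 : R) ^ ((r : ℕ) + f) := by
    have : (r : ℕ) + f = (f - (r : ℕ)) + 2 * (r : ℕ) := by omega
    rw [this, pow_add, pow_mul]
    simp
  -- done; unfold everything
  rw [epsCoeff]
  have hlast : N r (Fin.last f) = M.mulVec v (σ r) := by simp [hN]
  have hminor : (N.submatrix r.succAbove (Fin.last f).succAbove) =
      M.submatrix (fun a : Fin f =>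
        (I.erase (σ r)).orderEmbOfFin
          (by rw [Finset.card_erase_of_mem hσr, hI]; rfl) a) id := by
    ext a b
    rw [Fin.succAbove_last]
    simp only [Matrix.submatrix_apply, hN, Matrix.of_apply, Fin.snoc_castSucc, id]
    rw [hsub a, Finset.coe_orderIsoOfFin_apply]
  simp only [RelIso.coe_fn_toEquiv, Finset.coe_orderIsoOfFin_apply, ← hσ, hcard, hlast,
    hminor, Fin.val_last]
  rw [hsign]
  refine (mul_right_comm _ _ _).trans ?_
  rfl
end

section
/- Let R be a Noetherian commutative ring and let M be a nonzero torsion-free R-module with a finite free resolution 0 → F →^φ G → M → 0, and let f = rank F. Then the sequence F →^φ G →^{ε*} ∧^f F* ⊗ ∧^{f+1}G is exact at G, where ε* is the dual of the Buchsbaum–Rim map ε(φ) : ∧^{f+1}G* ⊗ ∧^f F → G*. -/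
open Matrix

open Finset

section Ass
variable {R M : Type*} [CommRing R] [AddCommGroup M] [Module R M]

private lemma ass_sub_or_quot (Y : Submodule R M) {P : Ideal R} (hP : IsAssociatedPrime P M) :
    IsAssociatedPrime P Y ∨ IsAssociatedPrime P (M ⧸ Y) := by
  exact associatedPrimes.subset_union_of_exact Y.injective_subtype (LinearMap.exact_subtype_mkQ Y) hP

private lemma ass_finite (R M : Type*) [CommRing R] [AddCommGroup M] [Module R M]
    [IsNoetherianRing R] [IsNoetherian R M] : (associatedPrimes R M).Finite := by
  exact associatedPrimes.finite R M

end Ass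


private lemma exists_ann {R : Type*} [CommRing R] [IsNoetherianRing R] [Nontrivial R]
    (N : Ideal R) (hN : ∀ r ∈ N, ∃ x : R, x ≠ 0 ∧ r * x = 0) :
    ∃ a : R, a ≠ 0 ∧ ∀ r ∈ N, r * a = 0 := by
  have hfin : (associatedPrimes R R).Finite := ass_finite R R
  have hsub : (N : Set R) ⊆ ⋃ p ∈ ((hfin.toFinset : Finset (Ideal R)) : Set (Ideal R)), ↑(id p) := by
    intro r hr
    have : r ∈ ⋃ p ∈ associatedPrimes R R, (p : Set R) := by
      rw [biUnion_associatedPrimes_eq_zero_divisors]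
      obtain ⟨x, hx0, hx⟩ := hN r hr
      exact ⟨x, hx0, by rwa [smul_eq_mul]⟩
    simpa [hfin.coe_toFinset] using this
  obtain ⟨p, hp, hNp⟩ := (Ideal.subset_union_prime (⊥ : Ideal R) ⊥ (fun i hi _ _ =>
    (hfin.mem_toFinset.mp hi).isPrime)).mp hsub
  obtain ⟨hprime, x, hx⟩ := isAssociatedPrime_iff.mp (hfin.mem_toFinset.mp hp)
  refine ⟨x, ?_, fun r hr => ?_⟩
  · rintro rfl
    rw [Submodule.colon_singleton_zero] at hx
    exact hprime.ne_top hx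
  · have : r ∈ p := hNp hr
    rw [hx, Submodule.mem_colon_singleton, Submodule.mem_bot, smul_eq_mul] at this
    exact this

private lemma neg_pow_sub {R : Type*} [CommRing R] {a b : ℕ} (h : b ≤ a) :
    (-1 : R) ^ (a - b) = (-1) ^ a * (-1) ^ b := by
  have : a - b + (b + b) = a + b := by omega
  have h2 : (-1 : R) ^ (a - b) * ((-1) ^ (b + b)) = (-1) ^ a * (-1) ^ b := by
    rw [← pow_add, this, pow_add]
  rwa [Even.neg_one_pow ⟨b, rfl⟩, mul_one] at h2

private lemma filter_lt_card {n g : ℕ} (s : Finset (Fin g)) (h : s.card = n) (k : Fin n) :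
    (s.filter fun j => j < s.orderEmbOfFin h k).card = (k : ℕ) := by
  have himg : s.filter (fun j => j < s.orderEmbOfFin h k)
      = (Finset.Iio k).image (s.orderEmbOfFin h) := by
    ext j
    simp only [mem_filter, mem_image, mem_Iio]
    constructor
    · rintro ⟨hj, hlt⟩
      refine ⟨(s.orderIsoOfFin h).symm ⟨j, hj⟩, ?_, ?_⟩
      · have hemb : s.orderEmbOfFin h ((s.orderIsoOfFin h).symm ⟨j, hj⟩) = j := by
          rw [← Finset.coe_orderIsoOfFin_apply, OrderIso.apply_symm_apply]
        exact (s.orderEmbOfFin h).strictMono.lt_iff_lt.mp (by rwa [hemb])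
      · rw [← Finset.coe_orderIsoOfFin_apply, OrderIso.apply_symm_apply]
    · rintro ⟨m, hm, rfl⟩
      exact ⟨Finset.orderEmbOfFin_mem s h m, (s.orderEmbOfFin h).strictMono hm⟩
  rw [himg, Finset.card_image_of_injective _ (s.orderEmbOfFin h).injective, Fin.card_Iio]

/-- erase orderEmb = composition with succAbove -/
private lemma orderEmb_erase {g n : ℕ} (s : Finset (Fin g)) (h : s.card = n + 1) (k : Fin (n + 1))
    (h' : (s.erase (s.orderEmbOfFin h k)).card = n) :
    ∀ r, (s.erase (s.orderEmbOfFin h k)).orderEmbOfFin h' r = s.orderEmbOfFin h (k.succAbove r) := by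
  have := Finset.orderEmbOfFin_unique h'
    (f := fun r => s.orderEmbOfFin h (k.succAbove r)) (fun r => Finset.mem_erase.mpr
      ⟨fun hh => (Fin.succAbove_ne k r) ((s.orderEmbOfFin h).injective hh),
        Finset.orderEmbOfFin_mem s h _⟩)
    ((s.orderEmbOfFin h).strictMono.comp (Fin.strictMono_succAbove k))
  exact fun r => (congrFun this r).symm

private lemma sum_eps_eq {R : Type*} [CommRing R] {f g : ℕ} (M : Matrix (Fin g) (Fin f) R)
    (I : Finset (Fin g)) (hI : I.card = f + 1) (v : Fin g → R) :
    ∑ i ∈ I.attach, epsCoeff M I hI i.1 i.2 * v i.1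
      = (-1 : R) ^ f * (Matrix.of fun k c =>
          Fin.cons (v (I.orderEmbOfFin hI k)) (fun j => M (I.orderEmbOfFin hI k) j) c).det := by
  rw [Matrix.det_succ_column_zero]
  -- reindex the LHS
  have reindex : ∑ i ∈ I.attach, epsCoeff M I hI i.1 i.2 * v i.1
      = ∑ k : Fin (f + 1), epsCoeff M I hI (I.orderEmbOfFin hI k)
          (Finset.orderEmbOfFin_mem I hI k) * v (I.orderEmbOfFin hI k) := by
    refine (Finset.sum_bij (fun (k : Fin (f+1)) _ => (⟨I.orderEmbOfFin hI k,
        Finset.orderEmbOfFin_mem I hI k⟩ : {x // x ∈ I}))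
      (fun k _ => Finset.mem_attach _ _)
      (fun k _ l _ hkl => (I.orderEmbOfFin hI).injective (by
        simpa [Subtype.ext_iff] using hkl))
      (fun x _ => ⟨(I.orderIsoOfFin hI).symm ⟨x.1, x.2⟩, Finset.mem_univ _, by
        simp [← Finset.coe_orderIsoOfFin_apply, Subtype.ext_iff]⟩)
      (fun k _ => rfl)).symm
  rw [reindex, Finset.mul_sum]
  refine Finset.sum_congr rfl fun k _ => ?_
  have hcard : (I.erase (I.orderEmbOfFin hI k)).card = f := by
    rw [Finset.card_erase_of_mem (Finset.orderEmbOfFin_mem I hI k), hI]; rfl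
  have hminor : (Matrix.of fun k' c =>
        Fin.cons (v (I.orderEmbOfFin hI k')) (fun j => M (I.orderEmbOfFin hI k') j) c).submatrix
          k.succAbove Fin.succ
      = M.submatrix (fun r : Fin f =>
          ((I.erase (I.orderEmbOfFin hI k)).orderIsoOfFin hcard r : Fin g)) id := by
    ext r l
    simp only [Matrix.submatrix_apply, Matrix.of_apply, Fin.cons_succ, id_eq,
      Finset.coe_orderIsoOfFin_apply, orderEmb_erase I hI k hcard r]
  rw [hminor]
  show epsCoeff M I hI _ _ * v _ = _
  rw [epsCoeff]
  have hfil : (I.filter fun j => j < I.orderEmbOfFin hI k).card = (k : ℕ) := filter_lt_card I hI k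
  -- the submatrix in epsCoeff uses proof `by rw ...`; it equals ours by proof irrelevance
  have hk : (k : ℕ) ≤ f := Fin.is_le k
  rw [hfil, neg_pow_sub hk]
  simp only [Matrix.of_apply, Fin.cons_zero]
  ring


private lemma master_step {R : Type*} [CommRing R] {g m t : ℕ}
    (W : Matrix (Fin g) (Fin m) R) (a : R) (e : Fin t → Fin g) (c : Fin (t + 1) → Fin m)
    (H : ∀ i : Fin g, a * (Matrix.of (Fin.snoc (fun r : Fin t => fun k => W (e r) (c k))
      (fun k => W i (c k)) : Fin (t + 1) → Fin (t + 1) → R)).det = 0) :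
    W.mulVec (fun j => a * ∑ k : Fin (t + 1), if j = c k then
      (-1 : R) ^ (k : ℕ) * (Matrix.of fun r l => W (e r) (c (k.succAbove l))).det else 0) = 0 := by
  have ht : (-1 : R) ^ t * (-1) ^ t = 1 := by
    rw [← pow_add]; exact Even.neg_one_pow ⟨t, rfl⟩
  funext i
  have h1 := H i
  rw [Matrix.det_succ_row _ (Fin.last t)] at h1
  have hminor : ∀ k : Fin (t + 1),
      ((Matrix.of (Fin.snoc (fun r : Fin t => fun k => W (e r) (c k)) (fun k => W i (c k)) :
        Fin (t + 1) → Fin (t + 1) → R)).submatrix (Fin.last t).succAbove k.succAbove)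
      = Matrix.of fun r l => W (e r) (c (k.succAbove l)) := by
    intro k; ext r l
    simp [Fin.succAbove_last, Fin.snoc_castSucc]
  simp only [hminor, Matrix.of_apply, Fin.snoc_last, Fin.val_last] at h1
  show (∑ j, W i j * (a * ∑ k : Fin (t + 1), if j = c k then
      (-1 : R) ^ (k : ℕ) * (Matrix.of fun r l => W (e r) (c (k.succAbove l))).det else 0)) = 0
  simp_rw [Finset.mul_sum]
  rw [Finset.sum_comm]
  simp_rw [mul_ite, mul_zero, Finset.sum_ite_eq' Finset.univ]
  have expand : (∑ k : Fin (t + 1), if c k ∈ Finset.univ then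
        W i (c k) * (a * ((-1 : R) ^ (k : ℕ) * (Matrix.of fun r l => W (e r) (c (k.succAbove l))).det)) else 0)
      = (-1 : R) ^ t * (a * ∑ j : Fin (t + 1), (-1 : R) ^ (t + (j : ℕ)) * W i (c j) *
          (Matrix.of fun r l => W (e r) (c (j.succAbove l))).det) := by
    rw [Finset.mul_sum, Finset.mul_sum]
    refine Finset.sum_congr rfl fun k _ => ?_
    simp only [Finset.mem_univ, if_true, pow_add]
    linear_combination (-(a * (-1 : R) ^ (k : ℕ) * W i (c k) *
      (Matrix.of fun r l => W (e r) (c (k.succAbove l))).det)) * ht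
  rw [expand, h1, mul_zero]

private lemma eps_vanish {R : Type*} [CommRing R] {f g : ℕ} (M : Matrix (Fin g) (Fin f) R)
    (I : Finset (Fin g)) (hI : I.card = f + 1) (x : Fin f → R) :
    ∑ i ∈ I.attach, epsCoeff M I hI i.1 i.2 * (M.mulVec x) i.1 = 0 := by
  rw [sum_eps_eq]
  set A := (Matrix.of fun k c => (Fin.cons (0:R) (fun j => M (I.orderEmbOfFin hI k) j) :
    Fin (f+1) → R) c : Matrix (Fin (f+1)) (Fin (f+1)) R) with hA
  have hB : (Matrix.of fun k c => Fin.cons ((M.mulVec x) (I.orderEmbOfFin hI k))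
        (fun j => M (I.orderEmbOfFin hI k) j) c)
      = A.updateCol 0 (fun k => ∑ i : Fin (f+1), (Fin.cons (0:R) x : Fin (f+1) → R) i • A k i) := by
    ext k c
    refine Fin.cases ?_ (fun c' => ?_) c
    · simp [hA, Matrix.updateCol_apply, Fin.sum_univ_succ, Matrix.mulVec,
        dotProduct, mul_comm]
    · simp [hA, Matrix.updateCol_apply, Fin.succ_ne_zero]
  rw [hB, Matrix.det_updateCol_sum]
  simp

private lemma cramer_mem {R : Type*} [CommRing R] {f g : ℕ} (M : Matrix (Fin g) (Fin f) R)
    (y : Fin g → R)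
    (h : ∀ (I : Finset (Fin g)) (hI : I.card = f + 1),
      ∑ i ∈ I.attach, epsCoeff M I hI i.1 i.2 * y i.1 = 0)
    (J : Finset (Fin g)) (hJ : J.card = f) :
    (M.submatrix (J.orderEmbOfFin hJ) id).det • y ∈ LinearMap.range M.mulVecLin := by
  classical
  set W : Matrix (Fin g) (Fin (f+1)) R := Matrix.of (fun i => Fin.cons (y i) (M i)) with hW
  set e : Fin f → Fin g := (J.orderEmbOfFin hJ : Fin f → Fin g) with he
  have H : ∀ i : Fin g, (1:R) * (Matrix.of (Fin.snoc
      (fun r : Fin f => fun k => W (e r) ((id : Fin (f+1) → Fin (f+1)) k))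
      (fun k => W i (id k)) : Fin (f+1) → Fin (f+1) → R)).det = 0 := by
    intro i
    rw [one_mul]
    by_cases hi : i ∈ J
    · set r0 := (J.orderIsoOfFin hJ).symm ⟨i, hi⟩ with hr0def
      have hr0 : e r0 = i := by
        rw [he, ← Finset.coe_orderIsoOfFin_apply, hr0def, OrderIso.apply_symm_apply]
      refine Matrix.det_zero_of_row_eq (i := Fin.castSucc r0) (j := Fin.last f)
        (Fin.castSucc_lt_last r0).ne ?_
      funext k
      simp [Fin.snoc_castSucc, Fin.snoc_last, hr0]
    · set I' := insert i J with hI'def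
      have hI' : I'.card = f + 1 := by rw [hI'def, Finset.card_insert_of_notMem hi, hJ]
      have hdet : (Matrix.of fun k c => Fin.cons (y (I'.orderEmbOfFin hI' k))
          (fun j => M (I'.orderEmbOfFin hI' k) j) c).det = 0 := by
        have hh := h I' hI'
        rw [sum_eps_eq] at hh
        exact (IsUnit.mul_right_eq_zero ((isUnit_one (M := R)).neg.pow f)).mp hh
      set u : Fin (f+1) → Fin g := Fin.snoc e i with hu
      have hne : ∀ r : Fin f, e r ≠ i := fun r hri => hi (hri ▸ Finset.orderEmbOfFin_mem J hJ r)
      have humem : ∀ k, u k ∈ I' := by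
        intro k
        refine Fin.lastCases ?_ (fun r => ?_) k
        · simp [hu, hI'def]
        · simp only [hu, Fin.snoc_castSucc, hI'def, Finset.mem_insert]
          exact Or.inr (Finset.orderEmbOfFin_mem J hJ r)
      have huinj : Function.Injective u := by
        intro a b hab
        induction a using Fin.lastCases with
        | last =>
          induction b using Fin.lastCases with
          | last => rfl
          | cast b =>
            rw [hu, Fin.snoc_last, Fin.snoc_castSucc] at hab
            exact absurd hab.symm (hne b)
        | cast a =>
          induction b using Fin.lastCases with
          | last =>
            rw [hu, Fin.snoc_last, Fin.snoc_castSucc] at hab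
            exact absurd hab (hne a)
          | cast b =>
            rw [hu, Fin.snoc_castSucc, Fin.snoc_castSucc] at hab
            rw [(J.orderEmbOfFin hJ).injective hab]
      have hφinj : Function.Injective (fun k => (I'.orderIsoOfFin hI').symm ⟨u k, humem k⟩) := by
        intro a b hab
        have := congrArg (fun z => ((I'.orderIsoOfFin hI') z : Fin g)) hab
        simp only [OrderIso.apply_symm_apply] at this
        exact huinj this
      set τ : Equiv.Perm (Fin (f+1)) :=
        Equiv.ofBijective _ (Finite.injective_iff_bijective.mp hφinj) with hτ
      have hkey : ∀ k, (I'.orderEmbOfFin hI') (τ k) = u k := by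
        intro k
        rw [← Finset.coe_orderIsoOfFin_apply]
        show (((I'.orderIsoOfFin hI') ((I'.orderIsoOfFin hI').symm ⟨u k, humem k⟩)) : Fin g) = u k
        rw [OrderIso.apply_symm_apply]
      have hmat : (Matrix.of (Fin.snoc
          (fun r : Fin f => fun k => W (e r) ((id : Fin (f+1) → Fin (f+1)) k))
          (fun k => W i (id k)) : Fin (f+1) → Fin (f+1) → R))
          = (Matrix.of fun k c => Fin.cons (y (I'.orderEmbOfFin hI' k))
              (fun j => M (I'.orderEmbOfFin hI' k) j) c).submatrix τ id := by
        ext k c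
        have : (Matrix.of fun k c => Fin.cons (y (I'.orderEmbOfFin hI' k))
            (fun j => M (I'.orderEmbOfFin hI' k) j) c) (τ k) c = W (u k) c := by
          simp only [Matrix.of_apply, hkey k, hW]
        rw [Matrix.submatrix_apply, id_eq, this]
        refine Fin.lastCases ?_ (fun r => ?_) k
        · simp [hu]
        · simp [hu, Fin.snoc_castSucc]
      rw [hmat, Matrix.det_permute, hdet, mul_zero]
  have hker := master_step W 1 e id H
  have hxv : ∀ j : Fin (f+1), ((1:R) * ∑ k : Fin (f+1), if j = id k then
      (-1:R)^(k:ℕ) * (Matrix.of fun r l => W (e r) (id (k.succAbove l))).det else 0)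
      = (-1:R)^(j:ℕ) * (Matrix.of fun r l => W (e r) (id (j.succAbove l))).det := by
    intro j
    rw [one_mul]
    simp [Finset.sum_ite_eq]
  have hd0 : (Matrix.of fun r l => W (e r) (id (((0:Fin (f+1))).succAbove l))).det
      = (M.submatrix (J.orderEmbOfFin hJ) id).det := by
    refine congrArg Matrix.det (Matrix.ext fun r l => ?_)
    simp [hW, Fin.succAbove_zero, he]
  refine ⟨fun j : Fin f => (-1:R)^(j:ℕ) *
    (Matrix.of fun r l => W (e r) (id ((j.succ).succAbove l))).det, ?_⟩
  funext i
  have h0 := congrFun hker i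
  simp only [Matrix.mulVec, dotProduct, Pi.zero_apply] at h0 ⊢
  simp only [hxv] at h0
  rw [Fin.sum_univ_succ] at h0
  simp only [Fin.val_zero, pow_zero, one_mul, hd0, Fin.val_succ] at h0
  have hW0 : ∀ i, W i 0 = y i := fun i => rfl
  have hWs : ∀ i (j : Fin f), W i j.succ = M i j := fun i j => rfl
  simp only [hW0, hWs] at h0
  have hterm : ∀ j : Fin f, M i j * ((-1:R)^((j:ℕ)+1) *
      (Matrix.of fun r l => W (e r) (id ((j.succ).succAbove l))).det)
      = -(M i j * ((-1:R)^(j:ℕ) *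
      (Matrix.of fun r l => W (e r) (id ((j.succ).succAbove l))).det)) := by
    intro j; rw [pow_succ]; ring
  rw [Finset.sum_congr rfl (fun j _ => hterm j)] at h0
  rw [Finset.sum_neg_distrib] at h0
  have hgoal : LinearMap.range M.mulVecLin = LinearMap.range M.mulVecLin := rfl
  show (∑ j : Fin f, M i j * ((-1:R)^(j:ℕ) *
      (Matrix.of fun r l => W (e r) (id ((j.succ).succAbove l))).det))
      = ((M.submatrix (J.orderEmbOfFin hJ) id).det • y) i
  have : ((M.submatrix (J.orderEmbOfFin hJ) id).det • y) i
      = (M.submatrix (J.orderEmbOfFin hJ) id).det * y i := rfl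
  rw [this]
  linear_combination -h0

private lemma mccoy {R : Type*} [CommRing R] {f g : ℕ}
    (M : Matrix (Fin g) (Fin f) R) (a : R) (ha : a ≠ 0)
    (hmin : ∀ (S : Finset (Fin g)) (hS : S.card = f),
      a * (M.submatrix (S.orderEmbOfFin hS) id).det = 0) :
    ¬ Function.Injective M.mulVecLin := by
  classical
  set P : ℕ → Prop := fun t => ∃ (S : Finset (Fin g)) (T : Finset (Fin f))
    (hS : S.card = t) (hT : T.card = t),
    a * (M.submatrix (S.orderEmbOfFin hS) (T.orderEmbOfFin hT)).det ≠ 0 with hPdef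
  have hP0 : P 0 := by
    refine ⟨∅, ∅, rfl, rfl, ?_⟩
    rw [Matrix.det_isEmpty]
    simpa using ha
  have hPf : ¬ P f := by
    rintro ⟨S, T, hS, hT, hne⟩
    have hTu : T = Finset.univ := Finset.eq_univ_of_card T (by rw [hT, Fintype.card_fin])
    subst hTu
    have hid : (id : Fin f → Fin f) = (Finset.univ.orderEmbOfFin hT : Fin f → Fin f) :=
      Finset.orderEmbOfFin_unique hT (fun x => Finset.mem_univ _) strictMono_id
    exact hne (by rw [← hid]; exact hmin S hS)
  set t := Nat.findGreatest P f with htdef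
  have hPt : P t := Nat.findGreatest_spec (Nat.zero_le f) hP0
  have htf : t < f := lt_of_le_of_ne (Nat.findGreatest_le f)
    (fun hh => hPf (hh ▸ hPt))
  have hnot : ¬ P (t + 1) := Nat.findGreatest_is_greatest (Nat.lt_succ_self t) htf
  obtain ⟨S, T, hS, hT, hne⟩ := hPt
  obtain ⟨j, hj⟩ : ∃ j : Fin f, j ∉ T := by
    by_contra hcc
    push_neg at hcc
    have hTu : T = Finset.univ := Finset.eq_univ_iff_forall.mpr hcc
    rw [hTu, Finset.card_univ, Fintype.card_fin] at hT
    omega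
  set T' := insert j T with hT'def
  have hT' : T'.card = t + 1 := by rw [hT'def, Finset.card_insert_of_notMem hj, hT]
  set c : Fin (t+1) → Fin f := (T'.orderEmbOfFin hT' : Fin (t+1) → Fin f) with hcdef
  set e : Fin t → Fin g := (S.orderEmbOfFin hS : Fin t → Fin g) with hedef
  have H : ∀ i : Fin g, a * (Matrix.of (Fin.snoc (fun r : Fin t => fun k => M (e r) (c k))
      (fun k => M i (c k)) : Fin (t+1) → Fin (t+1) → R)).det = 0 := by
    intro i
    by_cases hi : i ∈ S
    · set r0 := (S.orderIsoOfFin hS).symm ⟨i, hi⟩ with hr0def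
      have hr0 : e r0 = i := by
        rw [hedef, ← Finset.coe_orderIsoOfFin_apply, hr0def, OrderIso.apply_symm_apply]
      have : (Matrix.of (Fin.snoc (fun r : Fin t => fun k => M (e r) (c k))
          (fun k => M i (c k)) : Fin (t+1) → Fin (t+1) → R)).det = 0 := by
        refine Matrix.det_zero_of_row_eq (i := Fin.castSucc r0) (j := Fin.last t)
          (Fin.castSucc_lt_last r0).ne ?_
        funext k
        simp [Fin.snoc_castSucc, Fin.snoc_last, hr0]
      rw [this, mul_zero]
    · set S' := insert i S with hS'def
      have hS' : S'.card = t + 1 := by rw [hS'def, Finset.card_insert_of_notMem hi, hS]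
      have hz : a * (M.submatrix (S'.orderEmbOfFin hS') (T'.orderEmbOfFin hT')).det = 0 := by
        by_contra hzz
        exact hnot ⟨S', T', hS', hT', hzz⟩
      set u : Fin (t+1) → Fin g := Fin.snoc e i with hu
      have hnei : ∀ r : Fin t, e r ≠ i := fun r hri => hi (hri ▸ Finset.orderEmbOfFin_mem S hS r)
      have humem : ∀ k, u k ∈ S' := by
        intro k
        refine Fin.lastCases ?_ (fun r => ?_) k
        · simp [hu, hS'def]
        · simp only [hu, Fin.snoc_castSucc, hS'def, Finset.mem_insert]
          exact Or.inr (Finset.orderEmbOfFin_mem S hS r)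
      have huinj : Function.Injective u := by
        intro x1 x2 hab
        induction x1 using Fin.lastCases with
        | last =>
          induction x2 using Fin.lastCases with
          | last => rfl
          | cast b =>
            rw [hu, Fin.snoc_last, Fin.snoc_castSucc] at hab
            exact absurd hab.symm (hnei b)
        | cast a1 =>
          induction x2 using Fin.lastCases with
          | last =>
            rw [hu, Fin.snoc_last, Fin.snoc_castSucc] at hab
            exact absurd hab (hnei a1)
          | cast b =>
            rw [hu, Fin.snoc_castSucc, Fin.snoc_castSucc] at hab
            rw [(S.orderEmbOfFin hS).injective hab]
      have hφinj : Function.Injective (fun k => (S'.orderIsoOfFin hS').symm ⟨u k, humem k⟩) := by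
        intro x1 x2 hab
        have := congrArg (fun z => ((S'.orderIsoOfFin hS') z : Fin g)) hab
        simp only [OrderIso.apply_symm_apply] at this
        exact huinj this
      set τ : Equiv.Perm (Fin (t+1)) :=
        Equiv.ofBijective _ (Finite.injective_iff_bijective.mp hφinj) with hτ
      have hkey : ∀ k, (S'.orderEmbOfFin hS') (τ k) = u k := by
        intro k
        rw [← Finset.coe_orderIsoOfFin_apply]
        show (((S'.orderIsoOfFin hS') ((S'.orderIsoOfFin hS').symm ⟨u k, humem k⟩)) : Fin g) = u k
        rw [OrderIso.apply_symm_apply]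
      have hmat : (Matrix.of (Fin.snoc (fun r : Fin t => fun k => M (e r) (c k))
          (fun k => M i (c k)) : Fin (t+1) → Fin (t+1) → R))
          = (M.submatrix (S'.orderEmbOfFin hS') (T'.orderEmbOfFin hT')).submatrix τ id := by
        ext k l
        have h2 : (M.submatrix (S'.orderEmbOfFin hS') (T'.orderEmbOfFin hT')).submatrix τ id k l
            = M (u k) (c l) := by
          simp only [Matrix.submatrix_apply, id_eq, hkey k, hcdef]
        rw [h2]
        refine Fin.lastCases ?_ (fun r => ?_) k
        · simp [hu]
        · simp [hu, Fin.snoc_castSucc]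
      rw [hmat, Matrix.det_permute]
      linear_combination (((Equiv.Perm.sign τ : ℤ) : R)) * hz
  have hker := master_step M a e c H
  set k0 := (T'.orderIsoOfFin hT').symm ⟨j, Finset.mem_insert_self j T⟩ with hk0def
  have hck0 : c k0 = j := by
    rw [hcdef, ← Finset.coe_orderIsoOfFin_apply, hk0def, OrderIso.apply_symm_apply]
  have hmemT : ∀ l : Fin t, c (k0.succAbove l) ∈ T := by
    intro l
    have h1 : c (k0.succAbove l) ∈ T' := Finset.orderEmbOfFin_mem T' hT' _
    have h2 : c (k0.succAbove l) ≠ j := by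
      rw [← hck0]
      exact fun hh => Fin.succAbove_ne k0 l ((T'.orderEmbOfFin hT').injective hh)
    rcases Finset.mem_insert.mp h1 with h3 | h3
    · exact absurd h3 h2
    · exact h3
  have hTemb : (fun l : Fin t => c (k0.succAbove l)) = (T.orderEmbOfFin hT : Fin t → Fin f) :=
    Finset.orderEmbOfFin_unique hT hmemT
      ((T'.orderEmbOfFin hT').strictMono.comp (Fin.strictMono_succAbove k0))
  have hminor : (Matrix.of fun r l => M (e r) (c (k0.succAbove l)))
      = M.submatrix e (T.orderEmbOfFin hT) := by
    ext r l
    rw [Matrix.of_apply, congrFun hTemb l, Matrix.submatrix_apply]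
  intro hinj
  have hx0 := hinj (a₁ := fun j' => a * ∑ k : Fin (t+1), if j' = c k then
      (-1:R)^(k:ℕ) * (Matrix.of fun r l => M (e r) (c (k.succAbove l))).det else 0) (a₂ := 0)
    (by rw [Matrix.mulVecLin_apply, hker, map_zero])
  have hxj := congrFun hx0 j
  simp only [Pi.zero_apply] at hxj
  have hcond : ∀ k : Fin (t+1), (j = c k) = (k = k0) := by
    intro k
    apply propext
    constructor
    · intro hh
      exact (T'.orderEmbOfFin hT').injective (by rw [← hcdef, ← hh, hck0])
    · rintro rfl
      exact hck0.symm
  simp only [hcond] at hxj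
  rw [Finset.sum_ite_eq' Finset.univ k0] at hxj
  simp only [Finset.mem_univ, if_true, hminor] at hxj
  apply hne
  have hfin : (-1:R)^(k0:ℕ) * (a * (M.submatrix e (T.orderEmbOfFin hT)).det) = 0 := by
    linear_combination hxj
  have := (IsUnit.mul_right_eq_zero ((isUnit_one (M := R)).neg.pow (k0:ℕ))).mp hfin
  rw [hedef] at this
  exact this

/-- Let `M = coker φ` be nonzero and torsion free, with `φ` injective (so that
`0 → F → G → M → 0` is a finite free resolution). Then
`F →(φ) G →(ε*) ∧^f F* ⊗ ∧^{f+1}G` is exact at `G`: an element `y ∈ G` is killed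
by every component of `ε*` (the components being indexed by the `(f+1)`-subsets
`I` of `{1,…,g}`) if and only if `y` is in the image of `φ`. -/
theorem stmt14 (R : Type*) [CommRing R] [IsNoetherianRing R] (f g : ℕ)
    (M : Matrix (Fin g) (Fin f) R)
    (hinj : Function.Injective M.mulVecLin)
    (hnonzero : LinearMap.range M.mulVecLin ≠ ⊤)
    (htf : ∀ r : R, (∀ x : R, r * x = 0 → x = 0) →
      ∀ y : Fin g → R, r • y ∈ LinearMap.range M.mulVecLin →
        y ∈ LinearMap.range M.mulVecLin) :
    ∀ y : Fin g → R,
      (∀ (I : Finset (Fin g)) (hI : I.card = f + 1),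
        ∑ i ∈ I.attach, epsCoeff M I hI i.1 i.2 * y i.1 = 0) ↔
      y ∈ LinearMap.range M.mulVecLin := by
  intro y
  constructor
  · intro h
    by_contra hy
    have hnontriv : Nontrivial R := by
      by_contra hnt
      rw [not_nontrivial_iff_subsingleton] at hnt
      exact hnonzero (Submodule.eq_top_iff'.mpr (fun z => ⟨0, Subsingleton.elim _ _⟩))
    set N : Ideal R := (LinearMap.range M.mulVecLin).comap
      (LinearMap.toSpanSingleton R (Fin g → R) y) with hN
    have hmemN : ∀ r : R, r ∈ N ↔ r • y ∈ LinearMap.range M.mulVecLin := by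
      intro r
      rw [hN, Submodule.mem_comap, LinearMap.toSpanSingleton_apply]
    have hzd : ∀ r ∈ N, ∃ x : R, x ≠ 0 ∧ r * x = 0 := by
      intro r hr
      by_contra hc
      push_neg at hc
      have hreg : ∀ x : R, r * x = 0 → x = 0 := by
        intro x hx
        by_contra hx0
        exact hc x hx0 hx
      exact hy (htf r hreg y ((hmemN r).mp hr))
    obtain ⟨aa, ha0, hann⟩ := exists_ann N hzd
    have hmin : ∀ (S : Finset (Fin g)) (hS : S.card = f),
        aa * (M.submatrix (S.orderEmbOfFin hS) id).det = 0 := by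
      intro S hS
      have hmem : (M.submatrix (S.orderEmbOfFin hS) id).det ∈ N :=
        (hmemN _).mpr (cramer_mem M y h S hS)
      rw [mul_comm]
      exact hann _ hmem
    exact mccoy M aa ha0 hmin hinj
  · rintro ⟨x, rfl⟩ I hI
    simp only [Matrix.mulVecLin_apply]
    exact eps_vanish M I hI x
end

section
/- Let (R, m, k) be a Noetherian local ring and ψ : K → L a homomorphism of finitely generated R-modules with K free. Suppose M is a finitely generated R-module with m an associated prime of M, and suppose ψ ⊗ id_M : K ⊗ M → L ⊗ M is injective. Then ψ ⊗ id_k : K ⊗ k → L ⊗ k is injective; moreover if L is free, then ψ is injective and ψ(K) is a free direct summand of L. -/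
/-- Lemma of Buchsbaum–Eisenbud / Bruns–Herzog (1.3.4): over a Noetherian local
ring `(R, m, k)`, if `ψ : K → L` with `K` free and `m` an associated prime of `M`,
and `ψ ⊗ id_M` is injective, then `ψ ⊗ id_k` is injective; moreover if `L` is
free then `ψ` is injective and `ψ(K)` is a free direct summand of `L`. -/
theorem stmt16 (R : Type*) [CommRing R] [IsNoetherianRing R] [IsLocalRing R]
    (K L M : Type*) [AddCommGroup K] [Module R K] [AddCommGroup L] [Module R L]
    [AddCommGroup M] [Module R M]
    [Module.Finite R K] [Module.Free R K] [Module.Finite R L] [Module.Finite R M]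
    (ψ : K →ₗ[R] L)
    (hM : IsAssociatedPrime (IsLocalRing.maximalIdeal R) M)
    (hinj : Function.Injective (LinearMap.rTensor M ψ)) :
    Function.Injective (LinearMap.rTensor (IsLocalRing.ResidueField R) ψ) ∧
    (Module.Free R L →
      Function.Injective ψ ∧ Module.Free R (LinearMap.range ψ) ∧
        ∃ C : Submodule R L, IsCompl (LinearMap.range ψ) C) := by
  obtain ⟨hprime, x, hx⟩ := isAssociatedPrime_iff.1 hM
  -- the map `k = R/m → M`, `r ↦ r • x`, is injective
  have hker : LinearMap.ker (LinearMap.toSpanSingleton R M x) = IsLocalRing.maximalIdeal R := by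
    ext r
    rw [hx]
    simp [Submodule.mem_annihilator_span_singleton, LinearMap.mem_ker,
      LinearMap.toSpanSingleton_apply, Submodule.mem_colon_singleton]
  let ι : IsLocalRing.ResidueField R →ₗ[R] M :=
    Submodule.liftQ (IsLocalRing.maximalIdeal R) (LinearMap.toSpanSingleton R M x) hker.ge
  have hι : Function.Injective ι := by
    have h0 := Submodule.ker_liftQ (IsLocalRing.maximalIdeal R) (LinearMap.toSpanSingleton R M x) hker.ge
    have h1 := h0.trans ((congrArg (Submodule.map (Submodule.mkQ (IsLocalRing.maximalIdeal R))) hker).trans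
      (Submodule.mkQ_map_self _))
    exact LinearMap.ker_eq_bot.1 h1
  -- the commuting square
  have hsq : LinearMap.lTensor L ι ∘ₗ LinearMap.rTensor (IsLocalRing.ResidueField R) ψ =
      LinearMap.rTensor M ψ ∘ₗ LinearMap.lTensor K ι := by
    rw [LinearMap.lTensor_comp_rTensor, LinearMap.rTensor_comp_lTensor]
  have hKι : Function.Injective (LinearMap.lTensor K ι) :=
    Module.Flat.lTensor_preserves_injective_linearMap ι hι
  have h1 : Function.Injective (LinearMap.rTensor (IsLocalRing.ResidueField R) ψ) := by
    have hcomp : Function.Injective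
        (LinearMap.lTensor L ι ∘ₗ LinearMap.rTensor (IsLocalRing.ResidueField R) ψ) := by
      rw [hsq]; exact hinj.comp hKι
    exact Function.Injective.of_comp hcomp
  refine ⟨h1, fun hLfree ↦ ?_⟩
  have h1' : Function.Injective (LinearMap.lTensor (IsLocalRing.ResidueField R) ψ) :=
    (LinearMap.lTensor_inj_iff_rTensor_inj _ _).2 h1
  obtain ⟨l', hl'⟩ := (IsLocalRing.split_injective_iff_lTensor_residueField_injective ψ).2 h1'
  have hψinj : Function.Injective ψ :=
    Function.HasLeftInverse.injective ⟨l', LinearMap.congr_fun hl'⟩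
  refine ⟨hψinj, Module.Free.of_equiv (LinearEquiv.ofInjective ψ hψinj), ?_⟩
  -- projection onto the range
  let π : L →ₗ[R] LinearMap.range ψ :=
    (ψ.codRestrict (LinearMap.range ψ) (LinearMap.mem_range_self ψ)) ∘ₗ l'
  have hπ : ∀ y : LinearMap.range ψ, π y = y := by
    rintro ⟨y, a, rfl⟩
    ext
    simp only [π, LinearMap.comp_apply, LinearMap.codRestrict_apply]
    have := LinearMap.congr_fun hl' a
    simp only [LinearMap.comp_apply, LinearMap.id_apply] at this
    rw [this]
  exact ⟨LinearMap.ker π, LinearMap.isCompl_of_proj hπ⟩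
end

section
/- Let R be a Noetherian commutative ring, let F = (F_i, φ_i) be a finite free resolution of a finitely generated R-module M, and suppose M is torsion free. Then for every non-zerodivisor r ∈ R, the complex F/rF is a free resolution of M/rM over R/(r). -/
open Matrix

/-- Let `F` be a finite free resolution of `M = coker φ₁`, where
`φ_{i+1} : F_{i+1} → F_i` is given by the matrix `A i` and `rank F_i = b i`
vanishes for `i > n`, and suppose `M` is torsion free. Then for every
non-zerodivisor `r ∈ R`, the reduced complex `F/rF` (whose differentials are the
matrices `A i` with entries reduced mod `(r)`) is a free resolution of `M/rM`
over `R/(r)`: it is exact at every positive homological degree (its zeroth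
homology is `M/rM` by right exactness of base change). -/
theorem stmt18 (R : Type*) [CommRing R] [IsNoetherianRing R]
    (n : ℕ) (b : ℕ → ℕ) (hb : ∀ i, n < i → b i = 0)
    (A : ∀ i : ℕ, Matrix (Fin (b i)) (Fin (b (i + 1))) R)
    (hexact : ∀ i : ℕ,
      LinearMap.ker (A i).mulVecLin = LinearMap.range (A (i + 1)).mulVecLin)
    (htf : ∀ r : R, (∀ x : R, r * x = 0 → x = 0) →
      ∀ y : Fin (b 0) → R, r • y ∈ LinearMap.range (A 0).mulVecLin →
        y ∈ LinearMap.range (A 0).mulVecLin)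
    (r : R) (hr : ∀ x : R, r * x = 0 → x = 0) :
    ∀ i : ℕ,
      LinearMap.ker ((A i).map (Ideal.Quotient.mk (Ideal.span {r}))).mulVecLin =
        LinearMap.range
          ((A (i + 1)).map (Ideal.Quotient.mk (Ideal.span {r}))).mulVecLin := by
  set π := Ideal.Quotient.mk (Ideal.span {r}) with hπ
  -- composition of consecutive maps is zero
  have hcomp : ∀ i (x : Fin (b (i + 2)) → R), (A i) *ᵥ ((A (i + 1)) *ᵥ x) = 0 := by
    intro i x
    have : (A (i + 1)).mulVecLin x ∈ LinearMap.ker (A i).mulVecLin := by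
      rw [hexact i]; exact ⟨x, rfl⟩
    simpa using this
  -- key: r • z ∈ range (A i) → z ∈ range (A i)
  have key : ∀ i (z : Fin (b i) → R), r • z ∈ LinearMap.range (A i).mulVecLin →
      z ∈ LinearMap.range (A i).mulVecLin := by
    intro i
    cases i with
    | zero => exact htf r hr
    | succ i =>
      rintro z ⟨w, hw⟩
      have hz : (A i) *ᵥ z = 0 := by
        funext j
        apply hr
        have : r • ((A i) *ᵥ z) = 0 := by
          rw [← Matrix.mulVec_smul]
          rw [show r • z = (A (i+1)) *ᵥ w from hw.symm] -- hw : mulVecLin = r • z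
          exact hcomp i w
        simpa [Pi.smul_apply, smul_eq_mul] using congrFun this j
      have : z ∈ LinearMap.ker (A i).mulVecLin := hz
      rw [hexact i] at this
      exact this
  intro i
  apply le_antisymm
  · -- ker ⊆ range
    rintro ybar hy
    -- lift ybar
    obtain ⟨y, hylift⟩ : ∃ y : Fin (b (i+1)) → R, π ∘ y = ybar := by
      choose y hy' using fun j => Ideal.Quotient.mk_surjective (I := Ideal.span {r}) (ybar j)
      exact ⟨y, funext hy'⟩
    have hy0 : ∀ j, π ((A i *ᵥ y) j) = 0 := by
      intro j
      have := congrFun (LinearMap.mem_ker.mp hy) j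
      rw [← hylift] at this
      rw [RingHom.map_mulVec]
      simpa using this
    -- A i *ᵥ y = r • z
    obtain ⟨z, hz⟩ : ∃ z : Fin (b i) → R, A i *ᵥ y = r • z := by
      have : ∀ j, ∃ t, (A i *ᵥ y) j = r * t := by
        intro j
        have := hy0 j
        rw [hπ, Ideal.Quotient.eq_zero_iff_mem, Ideal.mem_span_singleton] at this
        exact this
      choose z hz using this
      exact ⟨z, funext hz⟩
    have hrz : r • z ∈ LinearMap.range (A i).mulVecLin := ⟨y, by simp [Matrix.mulVecLin_apply, hz]⟩
    obtain ⟨w, hw⟩ := key i z hrz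
    have hker : y - r • w ∈ LinearMap.ker (A i).mulVecLin := by
      show A i *ᵥ (y - r • w) = 0
      rw [Matrix.mulVec_sub, Matrix.mulVec_smul]
      rw [show (A i) *ᵥ w = z from hw, hz]
      simp
    rw [hexact i] at hker
    obtain ⟨x, hx⟩ := hker
    refine ⟨π ∘ x, ?_⟩
    show ((A (i+1)).map π).mulVecLin (π ∘ x) = ybar
    rw [← hylift]
    funext j
    have : (A (i+1)) *ᵥ x = y - r • w := hx
    calc (((A (i+1)).map π) *ᵥ (π ∘ x)) j = π (((A (i+1)) *ᵥ x) j) :=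
          (RingHom.map_mulVec π _ _ j).symm
      _ = π ((y - r • w) j) := by rw [this]
      _ = π (y j) := by
          have : π (r * w j) = 0 := by
            rw [hπ, Ideal.Quotient.eq_zero_iff_mem]
            exact Ideal.mul_mem_right _ _ (Ideal.subset_span rfl)
          simp [Pi.sub_apply, Pi.smul_apply, smul_eq_mul, map_sub, this]
  · -- range ⊆ ker
    rintro _ ⟨x, rfl⟩
    -- lift x
    obtain ⟨x', hx'⟩ : ∃ x' : Fin (b (i+2)) → R, π ∘ x' = x := by
      choose y hy' using fun j => Ideal.Quotient.mk_surjective (I := Ideal.span {r}) (x j)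
      exact ⟨y, funext hy'⟩
    show ((A i).map π) *ᵥ (((A (i+1)).map π) *ᵥ x) = 0
    rw [← hx']
    funext j
    have h1 : ((A (i+1)).map π) *ᵥ (π ∘ x') = π ∘ ((A (i+1)) *ᵥ x') := by
      funext k; exact (RingHom.map_mulVec π _ _ k).symm
    rw [h1]
    have h2 : (((A i).map π) *ᵥ (π ∘ ((A (i+1)) *ᵥ x'))) j = π (((A i) *ᵥ ((A (i+1)) *ᵥ x')) j) :=
      (RingHom.map_mulVec π _ _ j).symm
    rw [h2, hcomp i x']
    simp
end

section
/- Let μ ⊆ λ be partitions with μ ≠ λ, and suppose λ/μ is the shift by (s,t) of a partition γ satisfying γ_1 ≤ g and γ̃_{γ_1} > γ_1 - (g - f + 1) for integers f ≥ 1 and g ≥ 1 with γ_1 > g - f + 1. Then the threshold number satisfies T_{λ/μ}(f,g) = g - γ_1; in particular T_{λ/μ}(f,g) ≥ 0. -/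
open NatPartition

/-- `λ/μ` is the shift of `γ` by `(s,t)`: in 1-indexed terms, `μ_j = t` and
`λ_j = t + γ_{j-s}` for `s < j ≤ s + γ̃₁`, and `μ_j = λ_j` otherwise.
(Here rows are 0-indexed, so row `r` corresponds to `j = r + 1`.) -/
def IsShiftOf (lam mu gamma : NatPartition) (s t : ℕ) : Prop :=
  (∀ r : ℕ, s ≤ r → r < s + gamma.conj 0 →
    mu.parts r = t ∧ lam.parts r = t + gamma.parts (r - s)) ∧
  (∀ r : ℕ, ¬(s ≤ r ∧ r < s + gamma.conj 0) → mu.parts r = lam.parts r)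

lemma conj_ge_iff_s19 (l : NatPartition) (c k : ℕ) :
    k + 1 ≤ l.conj c ↔ c + 1 ≤ l.parts k := by
  constructor
  · intro h
    by_contra hc
    push_neg at hc
    have hsub : (l.parts.support.filter fun j => c + 1 ≤ l.parts j) ⊆ Finset.range k := by
      intro j hj
      simp only [Finset.mem_filter] at hj
      rw [Finset.mem_range]
      by_contra hjk
      push_neg at hjk
      have := l.antitone hjk
      omega
    have hcard := Finset.card_le_card hsub
    unfold NatPartition.conj at h
    simp only [Finset.card_range] at hcard
    omega
  · intro h
    have hsub : Finset.range (k + 1) ⊆ l.parts.support.filter fun j => c + 1 ≤ l.parts j := by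
      intro j hj
      rw [Finset.mem_range] at hj
      have hji : l.parts k ≤ l.parts j := l.antitone (by omega)
      exact Finset.mem_filter.2 ⟨Finsupp.mem_support_iff.2 (by omega), by omega⟩
    have hcard := Finset.card_le_card hsub
    unfold NatPartition.conj
    simpa using hcard

lemma conj_anti (l : NatPartition) {i j : ℕ} (h : i ≤ j) : l.conj j ≤ l.conj i := by
  apply Finset.card_le_card
  intro x hx
  simp only [Finset.mem_filter] at hx ⊢
  exact ⟨hx.1, by omega⟩

lemma conj_mono_sub {lam mu : NatPartition} (hsub : ∀ i, mu.parts i ≤ lam.parts i) (i : ℕ) :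
    mu.conj i ≤ lam.conj i := by
  apply Finset.card_le_card
  intro j hj
  simp only [Finset.mem_filter, Finsupp.mem_support_iff] at hj ⊢
  have := hsub j
  exact ⟨by omega, by omega⟩

lemma nupConj_le_conj {lam mu : NatPartition} (hsub : ∀ i, mu.parts i ≤ lam.parts i)
    (n : ℤ) (k : ℕ) : nupConj lam mu n k ≤ lam.conj k := by
  have := conj_mono_sub hsub k
  unfold nupConj
  omega

lemma nupConj_anti (lam mu : NatPartition) (n : ℤ) {j k : ℕ} (h : j ≤ k) :
    nupConj lam mu n k ≤ nupConj lam mu n j := by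
  have h1 := conj_anti lam h
  have h2 := conj_anti mu h
  unfold nupConj
  omega

/-- If `λ/μ` is the shift by `(s,t)` of a partition `γ` with `g - f + 1 < γ₁ ≤ g`
and `γ̃_{γ₁} > γ₁ - (g - f + 1)`, then `T_{λ/μ}(f,g) = g - γ₁ ≥ 0`. -/
theorem stmt19 (lam mu gamma : NatPartition) (s t : ℕ)
    (hsub : ∀ i, mu.parts i ≤ lam.parts i)
    (hne : mu.parts ≠ lam.parts)
    (hshift : IsShiftOf lam mu gamma s t)
    (f g : ℤ) (hf : 1 ≤ f) (hg : 1 ≤ g)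
    (h1 : (gamma.parts 0 : ℤ) ≤ g)
    (h2 : g - f + 1 < (gamma.parts 0 : ℤ))
    (h3 : (gamma.parts 0 : ℤ) - (g - f + 1) < (gamma.conj (gamma.parts 0 - 1) : ℤ)) :
    IsGreatest (threshSet lam mu f g) (g - (gamma.parts 0 : ℤ)) ∧
      0 ≤ g - (gamma.parts 0 : ℤ) := by
  -- basic facts
  have hm : 1 ≤ gamma.conj 0 := by
    by_contra hm
    push_neg at hm
    apply hne
    ext j
    exact hshift.2 j (by omega)
  have hγ1 : 1 ≤ gamma.parts 0 := (conj_ge_iff_s19 gamma 0 0).1 hm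
  refine ⟨⟨?_, ?_⟩, by linarith⟩
  · -- membership: ν'(λ,μ,·) ⊆ λ = ν''(λ,μ,γ₁)
    intro i
    have hnupp : nuppParts lam mu (g - (g - (gamma.parts 0 : ℤ))) i = lam.parts i := by
      have hle : lam.parts i ≤ mu.parts i + gamma.parts 0 := by
        by_cases hb : s ≤ i ∧ i < s + gamma.conj 0
        · obtain ⟨hmu, hlam⟩ := hshift.1 i hb.1 hb.2
          have := gamma.antitone (Nat.zero_le (i - s))
          omega
        · have := hshift.2 i hb
          omega
      unfold nuppParts
      have he : g - (g - (gamma.parts 0 : ℤ)) = (gamma.parts 0 : ℤ) := by ring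
      rw [he]
      omega
    rw [hnupp]
    unfold nupParts
    have hsubs : ((Finset.range (lam.parts 0)).filter
        fun k => i + 1 ≤ nupConj lam mu (f - (g - (gamma.parts 0 : ℤ))) k)
        ⊆ Finset.range (lam.parts i) := by
      intro k hk
      simp only [Finset.mem_filter, Finset.mem_range] at hk
      have h2' : nupConj lam mu (f - (g - (gamma.parts 0 : ℤ))) k ≤ lam.conj k :=
        nupConj_le_conj hsub _ k
      have h3' : k + 1 ≤ lam.parts i := (conj_ge_iff_s19 lam k i).1 (by omega)
      rw [Finset.mem_range]
      omega
    simpa using Finset.card_le_card hsubs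
  · -- upper bound
    intro u hu
    by_contra hgt
    push_neg at hgt
    set c : ℕ := (g - u).toNat with hc
    set d : ℕ := (f - u).toNat with hd
    have hcγ : c ≤ gamma.parts 0 - 1 := by omega
    have hm' := conj_anti gamma hcγ
    have hKc0 := conj_anti gamma (Nat.zero_le c)
    have hKd : d + 1 ≤ gamma.conj c := by omega
    set i := s + (gamma.conj c - (d + 1)) with hi
    obtain ⟨hmui, hlami⟩ := hshift.1 i (by omega) (by omega)
    have hγi : c + 1 ≤ gamma.parts (i - s) :=
      (conj_ge_iff_s19 gamma c (i - s)).1 (by omega)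
    -- ν''(λ,μ,g-u)_i = t + c
    have hnupp : nuppParts lam mu (g - u) i = t + c := by
      unfold nuppParts
      rw [hmui, hlami]
      omega
    -- λ̃_{t+c} ≥ s + γ̃_c
    have hconjL : s + gamma.conj c ≤ lam.conj (t + c) := by
      have hrow : (t + c) + 1 ≤ lam.parts (s + (gamma.conj c - 1)) := by
        obtain ⟨_, hlamr⟩ := hshift.1 (s + (gamma.conj c - 1)) (by omega) (by omega)
        have hγr : c + 1 ≤ gamma.parts ((s + (gamma.conj c - 1)) - s) :=
          (conj_ge_iff_s19 gamma c _).1 (by omega)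
        omega
      have := (conj_ge_iff_s19 lam (t + c) (s + (gamma.conj c - 1))).2 hrow
      omega
    have hnupconj : i + 1 ≤ nupConj lam mu (f - u) (t + c) := by
      unfold nupConj
      omega
    have hnup : t + c + 1 ≤ nupParts lam mu (f - u) i := by
      unfold nupParts
      have hlt0 : t + c < lam.parts 0 := by
        have := lam.antitone (Nat.zero_le i)
        omega
      have hsubs : Finset.range (t + c + 1) ⊆ (Finset.range (lam.parts 0)).filter
          fun k => i + 1 ≤ nupConj lam mu (f - u) k := by
        intro k hk
        rw [Finset.mem_range] at hk
        refine Finset.mem_filter.2 ⟨Finset.mem_range.2 (by omega), ?_⟩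
        exact le_trans hnupconj (nupConj_anti lam mu (f - u) (by omega : k ≤ t + c))
      simpa using Finset.card_le_card hsubs
    have hcontr := hu i
    rw [hnupp] at hcontr
    omega
end
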